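/- In ZM(m,n,r), for divisors n₁ | n, the subgroup ⟨a^{m₁}, b^{n₁}⟩ with m₁ | gcd(m, r^{n₁}−1) has order mn/(m₁n₁). -/

import Mathlib

def ZMrels (m n : ℕ) (r : ℤ) : Set (FreeGroup Bool) :=
  {FreeGroup.of true ^ m, FreeGroup.of false ^ n,
   (FreeGroup.of false)⁻¹ * FreeGroup.of true * FreeGroup.of false * (FreeGroup.of true) ^ (-r)}

abbrev ZM (m n : ℕ) (r : ℤ) : Type := PresentedGroup (ZMrels m n r)

def ZMa (m n : ℕ) (r : ℤ) : ZM m n r := PresentedGroup.of true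

def ZMb (m n : ℕ) (r : ℤ) : ZM m n r := PresentedGroup.of false

namespace ZMaux

open Multiplicative SemidirectProduct

/-! ### Generic cyclic group homomorphism machinery -/

noncomputable def cycHom (N : ℕ) {G : Type*} [Group G] (g : G) (hg : g ^ N = 1) :
    Multiplicative (ZMod N) →* G :=
  AddMonoidHom.toMultiplicativeLeft
    (ZMod.lift N ⟨MonoidHom.toAdditiveRight (zpowersHom G g), by
      simp only [MonoidHom.coe_toAdditiveRight, Function.comp_apply]
      simp [hg]⟩)

lemma cycHom_intCast (N : ℕ) {G : Type*} [Group G] (g : G) (hg : g ^ N = 1) (t : ℤ) :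
    cycHom N g hg (ofAdd ((t : ℤ) : ZMod N)) = g ^ t := by
  simp [cycHom, zpowersHom]

lemma cycHom_one (N : ℕ) {G : Type*} [Group G] (g : G) (hg : g ^ N = 1) :
    cycHom N g hg (ofAdd (1 : ZMod N)) = g := by
  have := cycHom_intCast N g hg 1
  simpa using this

lemma mulZModHomExt {N : ℕ} {H : Type*} [Group H] {F G : Multiplicative (ZMod N) →* H}
    (h : F (ofAdd 1) = G (ofAdd 1)) : F = G := by
  ext x
  obtain ⟨t, rfl⟩ := ZMod.intCast_surjective x
  have hx : (ofAdd ((t : ℤ) : ZMod N) : Multiplicative (ZMod N)) = (ofAdd (1 : ZMod N)) ^ t := by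
    rw [← ofAdd_zsmul]
    norm_num
  show F (ofAdd ((t : ℤ) : ZMod N)) = G (ofAdd ((t : ℤ) : ZMod N))
  rw [hx, map_zpow, map_zpow, h]

/-! ### The unit `r` mod `m` and the twisting action -/

noncomputable def unitsAut (M : ℕ) : (ZMod M)ˣ →* MulAut (Multiplicative (ZMod M)) where
  toFun c := AddEquiv.toMultiplicative (DistribMulAction.toAddAut (ZMod M)ˣ (ZMod M) c)
  map_one' := by ext x; simp
  map_mul' c d := by ext x; simp [mul_smul]

lemma unitsAut_apply (M : ℕ) (c : (ZMod M)ˣ) (x : ZMod M) :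
    unitsAut M c (ofAdd x) = ofAdd (c • x) := rfl

lemma rpow_eq_one (m n : ℕ) (r : ℤ) (hr : (m : ℤ) ∣ r ^ n - 1) : (r : ZMod m) ^ n = 1 := by
  have h0 : ((r ^ n - 1 : ℤ) : ZMod m) = 0 := by
    rw [ZMod.intCast_zmod_eq_zero_iff_dvd]; exact hr
  push_cast at h0
  rwa [sub_eq_zero] at h0

noncomputable def uu (m n : ℕ) (r : ℤ) (hn : 0 < n) (hr : (m : ℤ) ∣ r ^ n - 1) : (ZMod m)ˣ :=
  (IsUnit.of_pow_eq_one (rpow_eq_one m n r hr) hn.ne').unit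

lemma uu_val (m n : ℕ) (r : ℤ) (hn : 0 < n) (hr : (m : ℤ) ∣ r ^ n - 1) :
    ((uu m n r hn hr : (ZMod m)ˣ) : ZMod m) = (r : ZMod m) :=
  IsUnit.unit_spec _

lemma uu_pow (m n : ℕ) (r : ℤ) (hn : 0 < n) (hr : (m : ℤ) ∣ r ^ n - 1) :
    (uu m n r hn hr) ^ n = 1 := by
  ext
  rw [Units.val_pow_eq_pow_val, uu_val, rpow_eq_one m n r hr, Units.val_one]

noncomputable def phi (m n : ℕ) (r : ℤ) (hn : 0 < n) (hr : (m : ℤ) ∣ r ^ n - 1) :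
    Multiplicative (ZMod n) →* MulAut (Multiplicative (ZMod m)) :=
  cycHom n (unitsAut m (uu m n r hn hr)⁻¹) (by
    rw [← map_pow, inv_pow, uu_pow, inv_one, map_one])

lemma phi_intCast (m n : ℕ) (r : ℤ) (hn : 0 < n) (hr : (m : ℤ) ∣ r ^ n - 1) (j : ℤ) :
    phi m n r hn hr (ofAdd ((j : ℤ) : ZMod n)) = unitsAut m ((uu m n r hn hr)⁻¹ ^ j) := by
  rw [phi, cycHom_intCast, ← map_zpow]

/-! ### Relations in `ZM` -/

lemma mk_rel {m n : ℕ} {r : ℤ} {w : FreeGroup Bool} (hw : w ∈ ZMrels m n r) :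
    PresentedGroup.mk (ZMrels m n r) w = 1 :=
  (QuotientGroup.eq_one_iff _).mpr (Subgroup.subset_normalClosure hw)

lemma apow (m n : ℕ) (r : ℤ) : (ZMa m n r) ^ m = 1 := by
  have : ZMa m n r ^ m = PresentedGroup.mk (ZMrels m n r) (FreeGroup.of true ^ m) := by
    rw [map_pow]; rfl
  rw [this, mk_rel (by simp [ZMrels])]

lemma bpow (m n : ℕ) (r : ℤ) : (ZMb m n r) ^ n = 1 := by
  have : ZMb m n r ^ n = PresentedGroup.mk (ZMrels m n r) (FreeGroup.of false ^ n) := by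
    rw [map_pow]; rfl
  rw [this, mk_rel (by simp [ZMrels])]

lemma conj_rel (m n : ℕ) (r : ℤ) :
    (ZMb m n r)⁻¹ * ZMa m n r * ZMb m n r = ZMa m n r ^ r := by
  have h : PresentedGroup.mk (ZMrels m n r)
      ((FreeGroup.of false)⁻¹ * FreeGroup.of true * FreeGroup.of false
        * (FreeGroup.of true) ^ (-r)) = 1 :=
    mk_rel (by simp [ZMrels])
  rw [map_mul, map_mul, map_mul, map_inv, map_zpow] at h
  have h2 : (ZMb m n r)⁻¹ * ZMa m n r * ZMb m n r * (ZMa m n r) ^ (-r) = 1 := h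
  rw [zpow_neg] at h2
  exact (mul_inv_eq_one).mp h2

/-! ### The homomorphism `K →* ZM` data -/

noncomputable def fA (m n : ℕ) (r : ℤ) : Multiplicative (ZMod m) →* ZM m n r :=
  cycHom m (ZMa m n r) (apow m n r)

noncomputable def fB (m n : ℕ) (r : ℤ) : Multiplicative (ZMod n) →* ZM m n r :=
  cycHom n (ZMb m n r) (bpow m n r)

lemma fA_intCast (m n : ℕ) (r : ℤ) (t : ℤ) :
    fA m n r (ofAdd ((t : ℤ) : ZMod m)) = ZMa m n r ^ t :=
  cycHom_intCast _ _ _ _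

lemma fB_intCast (m n : ℕ) (r : ℤ) (t : ℤ) :
    fB m n r (ofAdd ((t : ℤ) : ZMod n)) = ZMb m n r ^ t :=
  cycHom_intCast _ _ _ _

lemma conj_fA (m n : ℕ) (r : ℤ) (hn : 0 < n) (hr : (m : ℤ) ∣ r ^ n - 1) (x : ZMod m) :
    (ZMb m n r)⁻¹ * fA m n r (ofAdd x) * ZMb m n r
      = fA m n r (ofAdd ((uu m n r hn hr) • x)) := by
  obtain ⟨t, rfl⟩ := ZMod.intCast_surjective x
  have hs : (uu m n r hn hr) • ((t : ℤ) : ZMod m) = ((r * t : ℤ) : ZMod m) := by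
    rw [Units.smul_def, uu_val, smul_eq_mul]; push_cast; ring
  rw [fA_intCast, hs, fA_intCast]
  have : (ZMb m n r)⁻¹ * ZMa m n r ^ t * ZMb m n r
      = ((ZMb m n r)⁻¹ * ZMa m n r * ((ZMb m n r)⁻¹)⁻¹) ^ t := by
    rw [conj_zpow]; group
  rw [this, inv_inv, conj_rel, ← zpow_mul]

lemma conj_fA' (m n : ℕ) (r : ℤ) (hn : 0 < n) (hr : (m : ℤ) ∣ r ^ n - 1) (x : ZMod m) :
    ZMb m n r * fA m n r (ofAdd x) * (ZMb m n r)⁻¹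
      = fA m n r (ofAdd ((uu m n r hn hr)⁻¹ • x)) := by
  have := conj_fA m n r hn hr ((uu m n r hn hr)⁻¹ • x)
  rw [smul_inv_smul] at this
  rw [← this]; group

lemma conj_fA_zpow (m n : ℕ) (r : ℤ) (hn : 0 < n) (hr : (m : ℤ) ∣ r ^ n - 1) (j : ℤ)
    (x : ZMod m) :
    (ZMb m n r) ^ j * fA m n r (ofAdd x) * (ZMb m n r) ^ (-j)
      = fA m n r (ofAdd (((uu m n r hn hr)⁻¹ ^ j) • x)) := by
  induction j using Int.induction_on generalizing x with
  | zero => simp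
  | succ j ih =>
    have key : (ZMb m n r) ^ (j + 1 : ℤ) * fA m n r (ofAdd x) * (ZMb m n r) ^ (-(j + 1 : ℤ))
        = (ZMb m n r) ^ (j : ℤ) *
            (ZMb m n r * fA m n r (ofAdd x) * (ZMb m n r)⁻¹) * (ZMb m n r) ^ (-(j : ℤ)) := by
      group
    rw [key, conj_fA' m n r hn hr, ih, ← mul_smul, ← zpow_add_one]
  | pred j ih =>
    have key : (ZMb m n r) ^ (-j - 1 : ℤ) * fA m n r (ofAdd x) * (ZMb m n r) ^ (-(-j - 1 : ℤ))
        = (ZMb m n r) ^ (-j : ℤ) *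
            ((ZMb m n r)⁻¹ * fA m n r (ofAdd x) * ZMb m n r) * (ZMb m n r) ^ (-(-j : ℤ)) := by
      group
    have hc : (ZMb m n r)⁻¹ * fA m n r (ofAdd x) * ZMb m n r
        = fA m n r (ofAdd ((uu m n r hn hr)⁻¹ ^ (-1 : ℤ) • x)) := by
      rw [conj_fA m n r hn hr]
      congr 2
      rw [zpow_neg_one, inv_inv]
    rw [key, hc, ih, ← mul_smul, ← zpow_add]
    norm_num

/-! ### The isomorphism with the semidirect product -/

noncomputable def fromK (m n : ℕ) (r : ℤ) (hn : 0 < n) (hr : (m : ℤ) ∣ r ^ n - 1) :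
    (Multiplicative (ZMod m) ⋊[phi m n r hn hr] Multiplicative (ZMod n)) →* ZM m n r :=
  SemidirectProduct.lift (fA m n r) (fB m n r) (by
    intro g
    refine MonoidHom.ext fun x => ?_
    obtain ⟨j, hj⟩ := ZMod.intCast_surjective g.toAdd
    have hg : g = ofAdd ((j : ℤ) : ZMod n) := by rw [hj, ofAdd_toAdd]
    obtain ⟨t, ht⟩ := ZMod.intCast_surjective x.toAdd
    have hx : x = ofAdd ((t : ℤ) : ZMod m) := by rw [ht, ofAdd_toAdd]
    subst hg hx
    simp only [MonoidHom.comp_apply, MulEquiv.coe_toMonoidHom, MulAut.conj_apply]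
    rw [phi_intCast, unitsAut_apply, fB_intCast, ← zpow_neg]
    rw [conj_fA_zpow m n r hn hr])

lemma fromK_inl (m n : ℕ) (r : ℤ) (hn : 0 < n) (hr : (m : ℤ) ∣ r ^ n - 1)
    (x : Multiplicative (ZMod m)) :
    fromK m n r hn hr (SemidirectProduct.inl x) = fA m n r x :=
  SemidirectProduct.lift_inl _ _ _ _

lemma fromK_inr (m n : ℕ) (r : ℤ) (hn : 0 < n) (hr : (m : ℤ) ∣ r ^ n - 1)
    (x : Multiplicative (ZMod n)) :
    fromK m n r hn hr (SemidirectProduct.inr x) = fB m n r x :=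
  SemidirectProduct.lift_inr _ _ _ _

noncomputable def toK (m n : ℕ) (r : ℤ) (hn : 0 < n) (hr : (m : ℤ) ∣ r ^ n - 1) :
    ZM m n r →* (Multiplicative (ZMod m) ⋊[phi m n r hn hr] Multiplicative (ZMod n)) :=
  PresentedGroup.toGroup
    (f := fun x => cond x (SemidirectProduct.inl (ofAdd (1 : ZMod m)))
      (SemidirectProduct.inr (ofAdd (1 : ZMod n)))) (by
    intro w hw
    have h1 : ((1 : ℤ) : ZMod n) = (1 : ZMod n) := by norm_num
    rcases hw with rfl | rfl | rfl
    · rw [map_pow, FreeGroup.lift_apply_of]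
      show (SemidirectProduct.inl (φ := phi m n r hn hr) (ofAdd (1 : ZMod m))) ^ m = 1
      rw [← map_pow, ← ofAdd_nsmul]
      simp
    · rw [map_pow, FreeGroup.lift_apply_of]
      show (SemidirectProduct.inr (φ := phi m n r hn hr) (ofAdd (1 : ZMod n))) ^ n = 1
      rw [← map_pow, ← ofAdd_nsmul]
      simp
    · rw [map_mul, map_mul, map_mul, map_inv, map_zpow, FreeGroup.lift_apply_of, FreeGroup.lift_apply_of]
      show (SemidirectProduct.inr (φ := phi m n r hn hr) (ofAdd (1 : ZMod n)))⁻¹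
          * SemidirectProduct.inl (ofAdd (1 : ZMod m))
          * SemidirectProduct.inr (ofAdd (1 : ZMod n))
          * (SemidirectProduct.inl (φ := phi m n r hn hr) (ofAdd (1 : ZMod m))) ^ (-r) = 1
      rw [← map_inv, ← SemidirectProduct.inl_aut_inv]
      have hy : (phi m n r hn hr (ofAdd (1 : ZMod n)))⁻¹ = unitsAut m (uu m n r hn hr) := by
        have h1 : (ofAdd (1 : ZMod n)) = ofAdd (((1 : ℤ) : ZMod n)) := by norm_num
        rw [h1, phi_intCast, zpow_one, ← map_inv, inv_inv]
      rw [hy, unitsAut_apply, ← map_zpow, ← map_mul, ← ofAdd_zsmul, ← ofAdd_add]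
      have : (uu m n r hn hr) • (1 : ZMod m) + (-r) • (1 : ZMod m) = 0 := by
        rw [Units.smul_def, uu_val, smul_eq_mul, zsmul_eq_mul]
        push_cast
        ring
      rw [this]
      simp)

lemma toK_a (m n : ℕ) (r : ℤ) (hn : 0 < n) (hr : (m : ℤ) ∣ r ^ n - 1) :
    toK m n r hn hr (ZMa m n r) = SemidirectProduct.inl (ofAdd (1 : ZMod m)) :=
  PresentedGroup.toGroup.of _

lemma toK_b (m n : ℕ) (r : ℤ) (hn : 0 < n) (hr : (m : ℤ) ∣ r ^ n - 1) :
    toK m n r hn hr (ZMb m n r) = SemidirectProduct.inr (ofAdd (1 : ZMod n)) :=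
  PresentedGroup.toGroup.of _

noncomputable def zmEquiv (m n : ℕ) (r : ℤ) (hn : 0 < n) (hr : (m : ℤ) ∣ r ^ n - 1) :
    ZM m n r ≃* (Multiplicative (ZMod m) ⋊[phi m n r hn hr] Multiplicative (ZMod n)) :=
  MonoidHom.toMulEquiv (toK m n r hn hr) (fromK m n r hn hr)
    (by
      apply PresentedGroup.ext
      intro x
      rcases x with _ | _
      · simp only [MonoidHom.comp_apply, MonoidHom.id_apply]
        rw [show PresentedGroup.of (rels := ZMrels m n r) false = ZMb m n r from rfl,
          toK_b, fromK_inr, fB, cycHom_one]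
      · simp only [MonoidHom.comp_apply, MonoidHom.id_apply]
        rw [show PresentedGroup.of (rels := ZMrels m n r) true = ZMa m n r from rfl,
          toK_a, fromK_inl, fA, cycHom_one])
    (by
      apply SemidirectProduct.hom_ext
      · apply mulZModHomExt
        simp only [MonoidHom.comp_apply, MonoidHom.id_apply]
        rw [fromK_inl, fA, cycHom_one, toK_a]
      · apply mulZModHomExt
        simp only [MonoidHom.comp_apply, MonoidHom.id_apply]
        rw [fromK_inr, fB, cycHom_one, toK_b])

/-! ### The subgroup computation in the semidirect product -/

lemma mul_mem_zmultiples (M w : ℕ) (c z : ZMod M)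
    (hz : z ∈ AddSubgroup.zmultiples ((w : ZMod M))) :
    c * z ∈ AddSubgroup.zmultiples ((w : ZMod M)) := by
  rw [AddSubgroup.mem_zmultiples_iff] at hz ⊢
  obtain ⟨k, rfl⟩ := hz
  obtain ⟨s, rfl⟩ := ZMod.intCast_surjective c
  exact ⟨s * k, by simp only [zsmul_eq_mul]; push_cast; ring⟩

lemma phi_left_mem (m n : ℕ) (r : ℤ) (hn : 0 < n) (hr : (m : ℤ) ∣ r ^ n - 1) (m₁ : ℕ)
    (g : Multiplicative (ZMod n)) (w : Multiplicative (ZMod m))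
    (hw : toAdd w ∈ AddSubgroup.zmultiples ((m₁ : ZMod m))) :
    toAdd (phi m n r hn hr g w) ∈ AddSubgroup.zmultiples ((m₁ : ZMod m)) := by
  obtain ⟨j, hj⟩ := ZMod.intCast_surjective (toAdd g)
  have hg : g = ofAdd ((j : ℤ) : ZMod n) := by rw [hj, ofAdd_toAdd]
  have hw' : w = ofAdd (toAdd w) := by rw [ofAdd_toAdd]
  rw [hg, phi_intCast, hw', unitsAut_apply, toAdd_ofAdd, Units.smul_def, smul_eq_mul]
  exact mul_mem_zmultiples m m₁ _ _ hw

noncomputable def TT (m n : ℕ) (r : ℤ) (hn : 0 < n) (hr : (m : ℤ) ∣ r ^ n - 1) (m₁ n₁ : ℕ) :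
    Subgroup (Multiplicative (ZMod m) ⋊[phi m n r hn hr] Multiplicative (ZMod n)) where
  carrier := {g | toAdd g.left ∈ AddSubgroup.zmultiples ((m₁ : ZMod m)) ∧
    toAdd g.right ∈ AddSubgroup.zmultiples ((n₁ : ZMod n))}
  one_mem' := by
    constructor <;> simp [AddSubgroup.zero_mem]
  mul_mem' := by
    rintro g h ⟨hg1, hg2⟩ ⟨hh1, hh2⟩
    constructor
    · rw [SemidirectProduct.mul_left, toAdd_mul]
      exact AddSubgroup.add_mem _ hg1 (phi_left_mem m n r hn hr m₁ _ _ hh1)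
    · rw [SemidirectProduct.mul_right, toAdd_mul]
      exact AddSubgroup.add_mem _ hg2 hh2
  inv_mem' := by
    rintro g ⟨hg1, hg2⟩
    constructor
    · rw [SemidirectProduct.inv_left]
      refine phi_left_mem m n r hn hr m₁ _ _ ?_
      rw [toAdd_inv]
      exact AddSubgroup.neg_mem _ hg1
    · rw [SemidirectProduct.inv_right, toAdd_inv]
      exact AddSubgroup.neg_mem _ hg2

lemma closure_eq_TT (m n : ℕ) (r : ℤ) (hn : 0 < n) (hr : (m : ℤ) ∣ r ^ n - 1) (m₁ n₁ : ℕ) :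
    Subgroup.closure {SemidirectProduct.inl (φ := phi m n r hn hr) (ofAdd ((m₁ : ZMod m))),
        SemidirectProduct.inr (ofAdd ((n₁ : ZMod n)))}
      = TT m n r hn hr m₁ n₁ := by
  apply le_antisymm
  · rw [Subgroup.closure_le]
    rintro g (rfl | rfl)
    · exact ⟨by simpa using AddSubgroup.mem_zmultiples _, by simp [AddSubgroup.zero_mem]⟩
    · exact ⟨by simp [AddSubgroup.zero_mem], by simpa using AddSubgroup.mem_zmultiples _⟩
  · rintro g ⟨h1, h2⟩
    rw [AddSubgroup.mem_zmultiples_iff] at h1 h2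
    obtain ⟨k, hk⟩ := h1
    obtain ⟨l, hl⟩ := h2
    rw [← SemidirectProduct.inl_left_mul_inr_right g]
    have e1 : g.left = (ofAdd ((m₁ : ZMod m))) ^ k := by
      rw [← ofAdd_zsmul, hk, ofAdd_toAdd]
    have e2 : g.right = (ofAdd ((n₁ : ZMod n))) ^ l := by
      rw [← ofAdd_zsmul, hl, ofAdd_toAdd]
    refine Subgroup.mul_mem _ ?_ ?_
    · rw [e1, map_zpow]
      exact Subgroup.zpow_mem _ (Subgroup.subset_closure (by simp)) k
    · rw [e2, map_zpow]
      exact Subgroup.zpow_mem _ (Subgroup.subset_closure (by simp)) l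

noncomputable def ttEquiv (m n : ℕ) (r : ℤ) (hn : 0 < n) (hr : (m : ℤ) ∣ r ^ n - 1)
    (m₁ n₁ : ℕ) :
    (TT m n r hn hr m₁ n₁) ≃
      (AddSubgroup.zmultiples ((m₁ : ZMod m))) × (AddSubgroup.zmultiples ((n₁ : ZMod n))) where
  toFun g := (⟨toAdd g.1.left, g.2.1⟩, ⟨toAdd g.1.right, g.2.2⟩)
  invFun p := ⟨⟨ofAdd p.1.1, ofAdd p.2.1⟩, p.1.2, p.2.2⟩
  left_inv g := rfl
  right_inv p := rfl

lemma card_TT (m n : ℕ) (r : ℤ) (hm : 0 < m) (hn : 0 < n) (hr : (m : ℤ) ∣ r ^ n - 1)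
    (m₁ n₁ : ℕ) (hm1 : m₁ ∣ m) (hn1 : n₁ ∣ n) :
    Nat.card (TT m n r hn hr m₁ n₁) = (m / m₁) * (n / n₁) := by
  rw [Nat.card_congr (ttEquiv m n r hn hr m₁ n₁), Nat.card_prod,
    Nat.card_zmultiples, Nat.card_zmultiples,
    ZMod.addOrderOf_coe _ hm.ne', ZMod.addOrderOf_coe _ hn.ne',
    Nat.gcd_eq_right hm1, Nat.gcd_eq_right hn1]

end ZMaux

theorem stmt17 (m n : ℕ) (r : ℤ) (hm : 0 < m) (hn : 0 < n)
    (hco : Nat.Coprime m n) (hco2 : IsCoprime (m : ℤ) (r - 1))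
    (hr : (m : ℤ) ∣ r ^ n - 1)
    (m₁ n₁ : ℕ) (hn1 : n₁ ∣ n) (hg : m₁ ∣ Int.gcd (m : ℤ) (r ^ n₁ - 1)) :
    Nat.card (Subgroup.closure {ZMa m n r ^ m₁, ZMb m n r ^ n₁} : Subgroup (ZM m n r))
      = m * n / (m₁ * n₁) := by
  classical
  have hm1 : m₁ ∣ m := by
    have h2 : (↑(Int.gcd (m : ℤ) (r ^ n₁ - 1)) : ℤ) ∣ (m : ℤ) := Int.gcd_dvd_left _ _
    exact_mod_cast (Int.natCast_dvd_natCast.mpr hg).trans h2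
  set e := ZMaux.zmEquiv m n r hn hr with he
  have hea : e (ZMa m n r ^ m₁)
      = SemidirectProduct.inl (φ := ZMaux.phi m n r hn hr)
        (Multiplicative.ofAdd ((m₁ : ZMod m))) := by
    show ZMaux.toK m n r hn hr (ZMa m n r ^ m₁) = _
    rw [map_pow, ZMaux.toK_a, ← map_pow, ← ofAdd_nsmul]
    congr 1
    simp
  have heb : e (ZMb m n r ^ n₁)
      = SemidirectProduct.inr (φ := ZMaux.phi m n r hn hr)
        (Multiplicative.ofAdd ((n₁ : ZMod n))) := by
    show ZMaux.toK m n r hn hr (ZMb m n r ^ n₁) = _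
    rw [map_pow, ZMaux.toK_b, ← map_pow, ← ofAdd_nsmul]
    congr 1
    simp
  set S : Subgroup (ZM m n r) := Subgroup.closure {ZMa m n r ^ m₁, ZMb m n r ^ n₁} with hS
  have step1 : Nat.card S = Nat.card (S.map e.toMonoidHom) :=
    Nat.card_congr (Subgroup.equivMapOfInjective _ _ e.injective).toEquiv
  have step2 : S.map e.toMonoidHom
      = Subgroup.closure {SemidirectProduct.inl (φ := ZMaux.phi m n r hn hr)
          (Multiplicative.ofAdd ((m₁ : ZMod m))),
        SemidirectProduct.inr (Multiplicative.ofAdd ((n₁ : ZMod n)))} := by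
    rw [hS, MonoidHom.map_closure, Set.image_insert_eq, Set.image_singleton]
    congr 1
    rw [show e.toMonoidHom (ZMa m n r ^ m₁) = e (ZMa m n r ^ m₁) from rfl, hea]
    rw [show e.toMonoidHom (ZMb m n r ^ n₁) = e (ZMb m n r ^ n₁) from rfl, heb]
  rw [step1, step2, ZMaux.closure_eq_TT, ZMaux.card_TT m n r hm hn hr m₁ n₁ hm1 hn1,
    Nat.div_mul_div_comm hm1 hn1]
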